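/- Let X be a vector space over ℂ, let p be a seminorm on X, and let x, z ∈ X. Suppose that λ·p(x) ≤ p(λx − z) for every λ > 0. Then there exists a ℂ-linear functional φ : X → ℂ such that Re φ(y) ≤ p(y) for all y ∈ X, φ(x) = p(x), and Re φ(z) ≤ 0. -/

import Mathlib

open Pointwise

/-- If for a seminorm `p` on a complex vector space `X` and `x, z ∈ X`
one has `λ p(x) ≤ p(λx − z)` for every `λ > 0`, then there exists a linear
functional `φ` with `Re φ(y) ≤ p(y)` for all `y`, `φ(x) = p(x)` and `Re φ(z) ≤ 0`. -/
theorem dissipative_estimate_implies_subdifferential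
    {X : Type*} [AddCommGroup X] [Module ℂ X]
    (p : Seminorm ℂ X) (x z : X)
    (h : ∀ lam : ℝ, 0 < lam → lam * p x ≤ p ((lam : ℂ) • x - z)) :
    ∃ φ : X →ₗ[ℂ] ℂ,
      (∀ y : X, (φ y).re ≤ p y) ∧ φ x = (p x : ℂ) ∧ (φ z).re ≤ 0 := by
  classical
  letI : Module ℝ X := Module.compHom X (algebraMap ℝ ℂ)
  have hsmul : ∀ (r : ℝ) (y : X), r • y = (r : ℂ) • y := by
    intro r y
    show (algebraMap ℝ ℂ r) • y = (r : ℂ) • y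
    rw [Complex.coe_algebraMap]
  letI : IsScalarTower ℝ ℂ X := ⟨by
    intro r c y
    rw [hsmul, Complex.real_smul, mul_smul]⟩
  -- the sublinear functional q
  set S : X → Set ℝ := fun y => (fun s : ℝ => (p (y - (s : ℂ) • z) : ℝ)) '' Set.Ici 0 with hS
  have hSne : ∀ y, (S y).Nonempty := fun y => ⟨p (y - (0 : ℂ) • z), 0, Set.self_mem_Ici, rfl⟩
  have hSbdd : ∀ y, BddBelow (S y) := by
    intro y
    refine ⟨0, ?_⟩
    rintro r ⟨s, _, rfl⟩
    exact apply_nonneg p _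
  set q : X → ℝ := fun y => sInf (S y) with hq
  have q_le : ∀ (y : X) (s : ℝ), 0 ≤ s → q y ≤ p (y - (s : ℂ) • z) :=
    fun y s hs => csInf_le (hSbdd y) ⟨s, hs, rfl⟩
  have q_nonneg : ∀ y, 0 ≤ q y := by
    intro y
    refine le_csInf (hSne y) ?_
    rintro r ⟨s, _, rfl⟩
    exact apply_nonneg p _
  have q_le_p : ∀ y, q y ≤ p y := by
    intro y
    have := q_le y 0 le_rfl
    simpa using this
  have le_q : ∀ t : ℝ, 0 < t → t * p x ≤ q ((t : ℂ) • x) := by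
    intro t ht
    refine le_csInf (hSne _) ?_
    rintro r ⟨s, hs, rfl⟩
    rcases eq_or_lt_of_le (show (0:ℝ) ≤ s from hs) with hs0 | hs0
    · rw [← hs0]
      simp only [Complex.ofReal_zero, zero_smul, sub_zero]
      rw [map_smul_eq_mul]
      simp [abs_of_pos ht]
    · have hts : 0 < t / s := div_pos ht hs0
      have h1 := h (t / s) hts
      have h2 : s * ((t / s) * p x) ≤ s * p (((t / s : ℝ) : ℂ) • x - z) :=
        mul_le_mul_of_nonneg_left h1 (le_of_lt hs0)
      have h3 : s * ((t / s) * p x) = t * p x := by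
        field_simp
      have h4 : s * p (((t / s : ℝ) : ℂ) • x - z) = p ((t : ℂ) • x - (s : ℂ) • z) := by
        have he : (t : ℂ) • x - (s : ℂ) • z = (s : ℂ) • (((t / s : ℝ) : ℂ) • x - z) := by
          rw [smul_sub, smul_smul, ← Complex.ofReal_mul]
          congr 2
          field_simp
        rw [he, map_smul_eq_mul, Complex.norm_real, Real.norm_eq_abs, abs_of_pos hs0]
      rw [h3, h4] at h2
      exact h2
  -- sublinearity of q
  have N_hom : ∀ c : ℝ, 0 < c → ∀ y : X, q (c • y) = c * q y := by
    intro c hc y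
    have hset : S (c • y) = c • S y := by
      ext r
      constructor
      · rintro ⟨s, hs, rfl⟩
        refine ⟨p (y - ((s / c : ℝ) : ℂ) • z), ⟨s / c, div_nonneg hs hc.le, rfl⟩, ?_⟩
        show c * p (y - ((s / c : ℝ) : ℂ) • z) = p (c • y - (s : ℂ) • z)
        have he : c • y - (s : ℂ) • z = (c : ℂ) • (y - ((s / c : ℝ) : ℂ) • z) := by
          rw [smul_sub, smul_smul, ← Complex.ofReal_mul, hsmul]
          congr 3
          field_simp
        rw [he, map_smul_eq_mul, Complex.norm_real, Real.norm_eq_abs, abs_of_pos hc]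
      · rintro ⟨r', ⟨s, hs, rfl⟩, rfl⟩
        refine ⟨c * s, mul_nonneg hc.le hs, ?_⟩
        show p (c • y - ((c * s : ℝ) : ℂ) • z) = c • p (y - (s : ℂ) • z)
        have he : c • y - ((c * s : ℝ) : ℂ) • z = (c : ℂ) • (y - (s : ℂ) • z) := by
          rw [smul_sub, smul_smul, ← Complex.ofReal_mul, hsmul]
        rw [he, map_smul_eq_mul, Complex.norm_real, Real.norm_eq_abs, abs_of_pos hc,
          smul_eq_mul]
    show sInf (S (c • y)) = c * sInf (S y)
    rw [hset, Real.sInf_smul_of_nonneg hc.le, smul_eq_mul]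
  have N_add : ∀ y₁ y₂ : X, q (y₁ + y₂) ≤ q y₁ + q y₂ := by
    intro y₁ y₂
    refine le_of_forall_pos_le_add ?_
    intro ε hε
    obtain ⟨a, ⟨s₁, hs₁, rfl⟩, ha⟩ := Real.lt_sInf_add_pos (hSne y₁) (half_pos hε)
    obtain ⟨b, ⟨s₂, hs₂, rfl⟩, hb⟩ := Real.lt_sInf_add_pos (hSne y₂) (half_pos hε)
    have key : q (y₁ + y₂) ≤ p (y₁ - (s₁ : ℂ) • z) + p (y₂ - (s₂ : ℂ) • z) := by
      have h1 : q (y₁ + y₂) ≤ p ((y₁ + y₂) - ((s₁ + s₂ : ℝ) : ℂ) • z) :=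
        q_le _ _ (add_nonneg hs₁ hs₂)
      refine h1.trans ?_
      have : (y₁ + y₂) - ((s₁ + s₂ : ℝ) : ℂ) • z
          = (y₁ - (s₁ : ℂ) • z) + (y₂ - (s₂ : ℂ) • z) := by
        push_cast
        rw [add_smul]
        abel
      rw [this]
      exact map_add_le_add p _ _
    calc q (y₁ + y₂) ≤ p (y₁ - (s₁ : ℂ) • z) + p (y₂ - (s₂ : ℂ) • z) := key
      _ ≤ (sInf (S y₁) + ε / 2) + (sInf (S y₂) + ε / 2) := add_le_add ha.le hb.le
      _ = q y₁ + q y₂ + ε := by ring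
  -- the partial linear map on ℝ ∙ x
  have Hx : ∀ c : ℝ, c • x = 0 → c • (p x : ℝ) = 0 := by
    intro c hc
    rw [hsmul] at hc
    rcases smul_eq_zero.1 hc with hc0 | hx0
    · have : c = 0 := by exact_mod_cast hc0
      rw [this, zero_smul]
    · rw [hx0, map_zero]
      simp
  set f : X →ₗ.[ℝ] ℝ := LinearPMap.mkSpanSingleton' x (p x) Hx with hf
  have hf_dom : f.domain = (Submodule.span ℝ {x}) := rfl
  have hf_le : ∀ w : f.domain, f w ≤ q w := by
    rintro ⟨w, hw⟩
    rw [hf_dom, Submodule.mem_span_singleton] at hw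
    obtain ⟨c, rfl⟩ := hw
    rw [LinearPMap.mkSpanSingleton'_apply]
    rcases lt_trichotomy c 0 with hc | hc | hc
    · have : c • (p x : ℝ) ≤ 0 :=
        smul_nonpos_of_nonpos_of_nonneg hc.le (apply_nonneg p x)
      exact this.trans (q_nonneg _)
    · subst hc
      simpa using q_nonneg (0 : X)
    · have := le_q c hc
      rw [← hsmul] at this
      simpa [smul_eq_mul] using this
  obtain ⟨g, hg_eq, hg_le⟩ := exists_extension_of_le_sublinear f q N_hom N_add hf_le
  have hgx : g x = p x := by
    have hxmem : x ∈ f.domain := by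
      rw [hf_dom]
      exact Submodule.mem_span_singleton_self x
    have := hg_eq ⟨x, hxmem⟩
    rw [this]
    exact LinearPMap.mkSpanSingleton'_apply_self x (p x : ℝ) Hx hxmem
  have hg_le_p : ∀ y, g y ≤ p y := fun y => (hg_le y).trans (q_le_p y)
  have hgz : g z ≤ 0 := by
    have h1 : q z ≤ p (z - (1 : ℝ) • z) := by simpa using q_le z 1 zero_le_one
    have h2 : z - (1 : ℝ) • z = 0 := by rw [one_smul, sub_self]
    rw [h2, map_zero] at h1
    exact (hg_le z).trans h1
  -- complexify
  set φ : X →ₗ[ℂ] ℂ := g.extendTo𝕜' with hφ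
  have hre : ∀ y : X, (φ y).re = g y := fun y =>
    g.extendTo𝕜'_apply_re (𝕜 := ℂ) y
  have habs : ∀ y : X, ‖φ y‖ ≤ p y := by
    intro y
    by_cases hy : φ y = 0
    · rw [hy]
      simpa using apply_nonneg p y
    · set c : ℂ := (starRingEnd ℂ) (φ y) / ‖φ y‖ with hc
      have habsne : (‖φ y‖ : ℝ) ≠ 0 := by
        simpa using hy
      have hcabs : ‖c‖ = 1 := by
        rw [hc, norm_div, Complex.norm_conj, Complex.norm_real, norm_norm,
          div_self habsne]
      have hφc : φ (c • y) = ‖φ y‖ := by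
        rw [map_smul, smul_eq_mul, hc, div_mul_eq_mul_div, mul_comm, Complex.mul_conj,
          Complex.normSq_eq_norm_sq]
        push_cast
        rw [sq, mul_div_assoc, div_self (Complex.ofReal_ne_zero.2 habsne), mul_one]
      have := hg_le_p (c • y)
      rw [← hre] at this
      rw [hφc] at this
      have hp : p (c • y) = p y := by
        rw [map_smul_eq_mul, hcabs, one_mul]
      rw [hp] at this
      simpa using this
  refine ⟨φ, ?_, ?_, ?_⟩
  · intro y
    rw [hre]
    exact hg_le_p y
  · have h1 : (φ x).re = p x := by rw [hre, hgx]
    have h2 : (φ x).im = 0 := by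
      have habs2 : (φ x).re ^ 2 + (φ x).im ^ 2 ≤ (p x) ^ 2 := by
        have := habs x
        have h3 : ‖φ x‖ ^ 2 ≤ (p x) ^ 2 :=
          pow_le_pow_left₀ (norm_nonneg _) this 2
        rw [Complex.sq_norm, Complex.normSq_apply] at h3
        nlinarith [h3]
      rw [h1] at habs2
      nlinarith [habs2]
    apply Complex.ext
    · simpa using h1
    · simpa using h2
  · rw [hre]
    exact hgz
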